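/- Let X_1,…,X_n be independent with X ~ ELS(λ1_n, θ, α1_n; F_b) and Y_1,…,Y_n be independent with Y ~ ELS(λ1_n, δ, α1_n; F_b), i.e. all location parameters equal a common λ and all shape parameters equal a common α > 0, with scale vectors θ = (θ_1,…,θ_n) and δ = (δ_1,…,δ_n). Assume θ, δ both lie in E_+ (or both in D_+) and that w ↦ w²·r̃_b(w) is increasing in w > 0. If θ ⪰^w δ (δ is weakly supermajorized by θ), then X_{n−1:n} ≤_st Y_{n−1:n}, i.e. F_{X_{n−1:n}}(x) ≥ F_{Y_{n−1:n}}(x) for all x > λ. -/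

import Mathlib

open Finset

/-- Reversed hazard rate of the baseline distribution: `f_b / F_b`. -/
noncomputable def rtilde (Fb fb : ℝ → ℝ) : ℝ → ℝ := fun w => fb w / Fb w

/-- Hazard rate of the baseline distribution: `f_b / (1 - F_b)`. -/
noncomputable def hrate (Fb fb : ℝ → ℝ) : ℝ → ℝ := fun w => fb w / (1 - Fb w)

/-- CDF of the exponentiated location-scale model `ELS(lam, th, al; F_b)`. -/
noncomputable def elsCDF (Fb : ℝ → ℝ) (lam th al : ℝ) : ℝ → ℝ :=
  fun x => Fb ((x - lam) / th) ^ al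

/-- CDF of the second-largest order statistic of `n` independent random
variables with CDFs `F 0, …, F (n-1)`. -/
noncomputable def secondMaxCDF (n : ℕ) (F : Fin n → ℝ → ℝ) : ℝ → ℝ := fun x =>
  (∑ l : Fin n, ∏ k ∈ Finset.univ.erase l, F k x) -
    ((n : ℝ) - 1) * ∏ k : Fin n, F k x

/-- CDF of the second-largest order statistic of `n` dependent random variables
with marginal CDFs `F i`, coupled by the Archimedean copula with generator `ψ`
(and inverse `φ`). -/
noncomputable def secondMaxCDFdep (n : ℕ) (ψ φ : ℝ → ℝ) (F : Fin n → ℝ → ℝ) : ℝ → ℝ := fun x =>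
  (∑ l : Fin n, ψ (∑ k ∈ Finset.univ.erase l, φ (F k x))) -
    ((n : ℝ) - 1) * ψ (∑ k : Fin n, φ (F k x))

/-- Reversed hazard rate of a CDF `F`: `F' / F`. -/
noncomputable def rhr (F : ℝ → ℝ) : ℝ → ℝ := fun x => deriv F x / F x

/-- Sum of the first `k` coordinates of a vector (partial sum from below). -/
def psum {n : ℕ} (x : Fin n → ℝ) (k : ℕ) : ℝ :=
  ∑ i ∈ Finset.univ.filter (fun i : Fin n => (i : ℕ) < k), x i

/-- Sum of the last `k` coordinates of a vector (partial sum from above). -/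
def ssum {n : ℕ} (x : Fin n → ℝ) (k : ℕ) : ℝ :=
  ∑ i ∈ Finset.univ.filter (fun i : Fin n => n - k ≤ (i : ℕ)), x i

/-- `E₊`: vectors with positive coordinates arranged in ascending order. -/
def EPlus {n : ℕ} (x : Fin n → ℝ) : Prop := (∀ i, 0 < x i) ∧ Monotone x

/-- `D₊`: vectors with positive coordinates arranged in descending order. -/
def DPlus {n : ℕ} (x : Fin n → ℝ) : Prop := (∀ i, 0 < x i) ∧ Antitone x

/-- `ψ` is an `n`-monotone Archimedean copula generator with right-continuous
inverse `φ`. -/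
structure IsArchGen (n : ℕ) (ψ φ : ℝ → ℝ) : Prop where
  cont : Continuous ψ
  one : ψ 0 = 1
  anti : StrictAntiOn ψ (Set.Ici 0)
  tend : Filter.Tendsto ψ Filter.atTop (nhds 0)
  range : ∀ x ≥ (0:ℝ), ψ x ∈ Set.Icc (0:ℝ) 1
  dm_sign : ∀ i ≤ n - 2, ∀ x ≥ (0:ℝ), 0 ≤ (-1:ℝ) ^ i * iteratedDeriv i ψ x
  dm_anti : AntitoneOn (fun x => (-1:ℝ) ^ (n - 2) * iteratedDeriv (n - 2) ψ x) (Set.Ici 0)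
  dm_convex : ConvexOn ℝ (Set.Ici 0) (fun x => (-1:ℝ) ^ (n - 2) * iteratedDeriv (n - 2) ψ x)
  inv_left : ∀ x ≥ (0:ℝ), φ (ψ x) = x
  inv_right : ∀ v ∈ Set.Ioc (0:ℝ) 1, ψ (φ v) = v




/-- Abel summation inequality on ℕ ranges. -/
lemma abel_nat : ∀ (n : ℕ) (v c : ℕ → ℝ), (∀ i, i < n → 0 ≤ c i) →
    (∀ i j, i ≤ j → j < n → c j ≤ c i) →
    (∀ k, k ≤ n → ∑ i ∈ Finset.range k, v i ≤ 0) →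
    ∑ i ∈ Finset.range n, v i * c i ≤ 0 := by
  intro n
  induction n with
  | zero => intro v c _ _ _; simp
  | succ n ih =>
    intro v c hc0 hcm hv
    have h1 : ∑ i ∈ Finset.range (n+1), v i * c i
        = (∑ i ∈ Finset.range (n+1), v i * (c i - c n)) + c n * ∑ i ∈ Finset.range (n+1), v i := by
      rw [Finset.mul_sum, ← Finset.sum_add_distrib]
      exact Finset.sum_congr rfl fun i _ => by ring
    rw [h1, Finset.sum_range_succ]
    have h2 : v n * (c n - c n) = 0 := by ring
    rw [h2, add_zero]
    have h3 : ∑ i ∈ Finset.range n, v i * (c i - c n) ≤ 0 := by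
      refine ih v (fun i => c i - c n) (fun i hi => ?_) (fun i j hij hj => ?_)
        (fun k hk => hv k (le_trans hk (Nat.le_succ n)))
      · have := hcm i n (le_of_lt hi) (Nat.lt_succ_self n); linarith
      · have := hcm i j hij (lt_trans hj (Nat.lt_succ_self n)); linarith
    have h4 : c n * ∑ i ∈ Finset.range (n+1), v i ≤ 0 :=
      mul_nonpos_of_nonneg_of_nonpos (hc0 n (Nat.lt_succ_self n)) (hv (n+1) le_rfl)
    linarith

/-- Abel inequality on `Fin n`, partial sums from below. -/
lemma abel_fin (n : ℕ) (v c : Fin n → ℝ) (hc0 : ∀ i, 0 ≤ c i)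
    (hcm : ∀ i j : Fin n, i ≤ j → c j ≤ c i)
    (hv : ∀ k ≤ n, ∑ i ∈ Finset.univ.filter (fun i : Fin n => (i : ℕ) < k), v i ≤ 0) :
    ∑ i, v i * c i ≤ 0 := by
  classical
  set v' : ℕ → ℝ := fun i => if h : i < n then v ⟨i, h⟩ else 0 with hv'
  set c' : ℕ → ℝ := fun i => if h : i < n then c ⟨i, h⟩ else 0 with hc'
  have key : ∀ k, k ≤ n → ∑ i ∈ Finset.range k, v' i
      = ∑ i ∈ Finset.univ.filter (fun i : Fin n => (i : ℕ) < k), v i := by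
    intro k hk
    rw [Finset.sum_filter]
    have e1 : ∑ a : Fin n, (if (a : ℕ) < k then v a else 0)
        = ∑ i ∈ Finset.range n, (fun i => if i < k then v' i else 0) i := by
      rw [← Fin.sum_univ_eq_sum_range (fun i => if i < k then v' i else 0) n]
      refine Finset.sum_congr rfl fun a _ => ?_
      by_cases h : (a : ℕ) < k <;> simp [h, hv', a.isLt]
    rw [e1]
    have : Finset.range k = (Finset.range n).filter (fun i => i < k) := by
      ext i; simp only [Finset.mem_range, Finset.mem_filter]; omega
    rw [this, ← Finset.sum_filter]
  have main : ∑ i ∈ Finset.range n, v' i * c' i ≤ 0 := by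
    refine abel_nat n v' c' (fun i hi => ?_) (fun i j hij hj => ?_) (fun k hk => by
      rw [key k hk]; exact hv k hk)
    · simp only [hc', dif_pos hi]; exact hc0 _
    · have hi : i < n := lt_of_le_of_lt hij hj
      simp only [hc', dif_pos hi, dif_pos hj]
      exact hcm ⟨i, hi⟩ ⟨j, hj⟩ hij
  calc ∑ i, v i * c i = ∑ i ∈ Finset.range n, (fun i => v' i * c' i) i := by
        rw [← Fin.sum_univ_eq_sum_range (fun i => v' i * c' i) n]
        refine Finset.sum_congr rfl fun i _ => ?_
        simp [hv', hc', i.isLt]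
    _ ≤ 0 := main

/-- Abel inequality on `Fin n`, partial sums from above, ascending weights. -/
lemma abel_fin_rev (n : ℕ) (v c : Fin n → ℝ) (hc0 : ∀ i, 0 ≤ c i)
    (hcm : ∀ i j : Fin n, i ≤ j → c i ≤ c j)
    (hv : ∀ k ≤ n, ∑ i ∈ Finset.univ.filter (fun i : Fin n => n - k ≤ (i : ℕ)), v i ≤ 0) :
    ∑ i, v i * c i ≤ 0 := by
  classical
  have h := abel_fin n (fun i => v i.rev) (fun i => c i.rev) (fun i => hc0 _)
    (fun i j hij => hcm _ _ (Fin.rev_le_rev.mpr hij)) ?_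
  · calc ∑ i, v i * c i = ∑ i : Fin n, v i.rev * c i.rev :=
          (Fintype.sum_bijective Fin.rev Fin.rev_bijective
            (fun i => v i.rev * c i.rev) (fun i => v i * c i)
            (fun i => rfl)).symm
      _ ≤ 0 := h
  · intro k hk
    have e : ∑ i ∈ Finset.univ.filter (fun i : Fin n => (i : ℕ) < k), (fun i : Fin n => v i.rev) i
        = ∑ i ∈ Finset.univ.filter (fun i : Fin n => n - k ≤ (i : ℕ)), v i := by
      refine Finset.sum_nbij' (fun i => Fin.rev i) (fun i => Fin.rev i) ?_ ?_ ?_ ?_ ?_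
      · intro i hi
        simp only [Finset.mem_filter, Finset.mem_univ, true_and] at hi ⊢
        have hr : ((Fin.rev i : Fin n) : ℕ) = n - (↑i + 1) := Fin.val_rev i
        have := i.isLt
        omega
      · intro i hi
        simp only [Finset.mem_filter, Finset.mem_univ, true_and] at hi ⊢
        have hr : ((Fin.rev i : Fin n) : ℕ) = n - (↑i + 1) := Fin.val_rev i
        have := i.isLt
        omega
      · intro i _; exact Fin.rev_rev i
      · intro i _; exact Fin.rev_rev i
      · intro i _; rfl
    rw [e]
    exact hv k hk


/-- If `f` is continuous on `[a,b]` and has nonnegative derivative on `(a,b)`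
except possibly at finitely many points, then `f a ≤ f b`. -/
lemma le_of_deriv_nonneg_off_finite_aux :
    ∀ (m : ℕ) (S : Finset ℝ), S.card ≤ m → ∀ (a b : ℝ), a ≤ b → ∀ f : ℝ → ℝ,
      ContinuousOn f (Set.Icc a b) →
      (∀ t ∈ Set.Ioo a b, t ∉ S → ∃ d, 0 ≤ d ∧ HasDerivAt f d t) →
      f a ≤ f b := by
  have base : ∀ (a b : ℝ), a ≤ b → ∀ f : ℝ → ℝ, ContinuousOn f (Set.Icc a b) →
      (∀ t ∈ Set.Ioo a b, ∃ d, 0 ≤ d ∧ HasDerivAt f d t) → f a ≤ f b := by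
    intro a b hab f hcont hderiv
    rcases eq_or_lt_of_le hab with rfl | hlt
    · exact le_refl _
    · have hmono : MonotoneOn f (Set.Icc a b) := by
        refine monotoneOn_of_deriv_nonneg (convex_Icc a b) hcont ?_ ?_
        · intro t ht
          rw [interior_Icc] at ht
          obtain ⟨d, _, hd⟩ := hderiv t ht
          exact hd.differentiableAt.differentiableWithinAt
        · intro t ht
          rw [interior_Icc] at ht
          obtain ⟨d, hd0, hd⟩ := hderiv t ht
          rw [hd.deriv]; exact hd0
      exact hmono (Set.left_mem_Icc.mpr hab) (Set.right_mem_Icc.mpr hab) hab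
  intro m
  induction m with
  | zero =>
    intro S hS a b hab f hcont hderiv
    have hSe : S = ∅ := Finset.card_eq_zero.mp (Nat.le_zero.mp hS)
    exact base a b hab f hcont (fun t ht => hderiv t ht (by simp [hSe]))
  | succ m ih =>
    intro S hS a b hab f hcont hderiv
    by_cases hne : (S.filter (fun s => s ∈ Set.Ioo a b)).Nonempty
    · obtain ⟨t₀, ht₀⟩ := hne
      rw [Finset.mem_filter] at ht₀
      obtain ⟨ht₀S, ht₀ab⟩ := ht₀
      have hcard : (S.erase t₀).card ≤ m := by
        have := Finset.card_erase_of_mem ht₀S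
        omega
      have h1 : f a ≤ f t₀ := by
        refine ih (S.erase t₀) hcard a t₀ ht₀ab.1.le f
          (hcont.mono (Set.Icc_subset_Icc le_rfl ht₀ab.2.le)) ?_
        intro t ht htS
        refine hderiv t ⟨ht.1, lt_trans ht.2 ht₀ab.2⟩ ?_
        intro htS'
        exact htS (Finset.mem_erase.mpr ⟨ne_of_lt ht.2, htS'⟩)
      have h2 : f t₀ ≤ f b := by
        refine ih (S.erase t₀) hcard t₀ b ht₀ab.2.le f
          (hcont.mono (Set.Icc_subset_Icc ht₀ab.1.le le_rfl)) ?_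
        intro t ht htS
        refine hderiv t ⟨lt_trans ht₀ab.1 ht.1, ht.2⟩ ?_
        intro htS'
        exact htS (Finset.mem_erase.mpr ⟨(ne_of_lt ht.1).symm, htS'⟩)
      exact le_trans h1 h2
    · refine base a b hab f hcont ?_
      intro t ht
      refine hderiv t ht ?_
      intro htS
      exact hne ⟨t, Finset.mem_filter.mpr ⟨htS, ht⟩⟩

lemma le_of_deriv_nonneg_off_finite (S : Finset ℝ) (a b : ℝ) (hab : a ≤ b) (f : ℝ → ℝ)
    (hcont : ContinuousOn f (Set.Icc a b))
    (hderiv : ∀ t ∈ Set.Ioo a b, t ∉ S → ∃ d, 0 ≤ d ∧ HasDerivAt f d t) :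
    f a ≤ f b :=
  le_of_deriv_nonneg_off_finite_aux S.card S le_rfl a b hab f hcont hderiv


lemma Tsum_nonneg (n : ℕ) (u : Fin n → ℝ) (hu0 : ∀ i, 0 ≤ u i) (hu1 : ∀ i, u i ≤ 1)
    (k : Fin n) :
    0 ≤ ∑ l ∈ Finset.univ.erase k, (1 - u l) * ∏ j ∈ Finset.univ.erase l, u j := by
  refine Finset.sum_nonneg fun l _ => mul_nonneg (by linarith [hu1 l]) ?_
  exact Finset.prod_nonneg fun j _ => hu0 j

lemma Tsum_mono (n : ℕ) (u : Fin n → ℝ) (hu0 : ∀ i, 0 ≤ u i) (hu1 : ∀ i, u i ≤ 1)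
    (i j : Fin n) (hu : u j ≤ u i) :
    ∑ l ∈ Finset.univ.erase j, (1 - u l) * ∏ m ∈ Finset.univ.erase l, u m ≤
      ∑ l ∈ Finset.univ.erase i, (1 - u l) * ∏ m ∈ Finset.univ.erase l, u m := by
  classical
  by_cases hij : i = j
  · subst hij; exact le_refl _
  · -- reduce to comparing the terms T i and T j
    have hTi_le_Tj : (1 - u i) * ∏ m ∈ Finset.univ.erase i, u m ≤
        (1 - u j) * ∏ m ∈ Finset.univ.erase j, u m := by
      have hji : j ∈ Finset.univ.erase i := by
        rw [Finset.mem_erase]; exact ⟨fun h => hij (h.symm), Finset.mem_univ j⟩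
      have hij' : i ∈ Finset.univ.erase j := by
        rw [Finset.mem_erase]; exact ⟨hij, Finset.mem_univ i⟩
      have h1 : ∏ m ∈ Finset.univ.erase i, u m
          = u j * ∏ m ∈ (Finset.univ.erase i).erase j, u m :=
        (Finset.mul_prod_erase _ _ hji).symm
      have h2 : ∏ m ∈ Finset.univ.erase j, u m
          = u i * ∏ m ∈ (Finset.univ.erase i).erase j, u m := by
        rw [Finset.erase_right_comm]
        exact (Finset.mul_prod_erase _ _ hij').symm
      rw [h1, h2]
      have hQ : 0 ≤ ∏ m ∈ (Finset.univ.erase i).erase j, u m :=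
        Finset.prod_nonneg fun m _ => hu0 m
      nlinarith [hu0 i, hu0 j, hu1 i, hu1 j]
    have hsi : ∑ l ∈ Finset.univ.erase i, (1 - u l) * ∏ m ∈ Finset.univ.erase l, u m
        + (1 - u i) * ∏ m ∈ Finset.univ.erase i, u m
        = ∑ l : Fin n, (1 - u l) * ∏ m ∈ Finset.univ.erase l, u m :=
      Finset.sum_erase_add _ _ (Finset.mem_univ i)
    have hsj : ∑ l ∈ Finset.univ.erase j, (1 - u l) * ∏ m ∈ Finset.univ.erase l, u m
        + (1 - u j) * ∏ m ∈ Finset.univ.erase j, u m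
        = ∑ l : Fin n, (1 - u l) * ∏ m ∈ Finset.univ.erase l, u m :=
      Finset.sum_erase_add _ _ (Finset.mem_univ j)
    linarith

lemma slice_nonneg (n : ℕ) (hn : 2 ≤ n) (u R v : Fin n → ℝ) (a : ℝ)
    (habel : ∑ k : Fin n, v k * (a * (R k *
        ∑ l ∈ Finset.univ.erase k, (1 - u l) * ∏ j ∈ Finset.univ.erase l, u j)) ≤ 0) :
    0 ≤ (∑ l : Fin n, ∑ k ∈ Finset.univ.erase l,
          (∏ j ∈ (Finset.univ.erase l).erase k, u j) * (-(a * v k) * (u k * R k)))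
        - ((n:ℝ)-1) * (∑ k : Fin n,
          (∏ j ∈ Finset.univ.erase k, u j) * (-(a * v k) * (u k * R k))) := by
  classical
  set T : Fin n → ℝ := fun l => (1 - u l) * ∏ j ∈ Finset.univ.erase l, u j with hT
  set X : Fin n → ℝ := fun k => -(a * v k) * (u k * R k) with hX
  have hswap : ∑ l : Fin n, ∑ k ∈ Finset.univ.erase l,
      (∏ j ∈ (Finset.univ.erase l).erase k, u j) * X k
      = ∑ k : Fin n, ∑ l ∈ Finset.univ.erase k,
      (∏ j ∈ (Finset.univ.erase l).erase k, u j) * X k := by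
    refine Finset.sum_comm' fun l k => ?_
    simp only [Finset.mem_univ, true_and, and_true, Finset.mem_erase]
    exact ne_comm
  have hkDk : ∀ k : Fin n, u k * ((∑ l ∈ Finset.univ.erase k,
      ∏ j ∈ (Finset.univ.erase l).erase k, u j)
      - ((n:ℝ)-1) * ∏ j ∈ Finset.univ.erase k, u j) = ∑ l ∈ Finset.univ.erase k, T l := by
    intro k
    have h1 : ∀ l ∈ Finset.univ.erase k,
        u k * ∏ j ∈ (Finset.univ.erase l).erase k, u j = ∏ j ∈ Finset.univ.erase l, u j := by
      intro l hl
      have hkl : k ∈ Finset.univ.erase l := by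
        rw [Finset.mem_erase] at hl ⊢
        exact ⟨Ne.symm hl.1, Finset.mem_univ k⟩
      exact Finset.mul_prod_erase _ _ hkl
    have h2 : u k * ∏ j ∈ Finset.univ.erase k, u j = ∏ j, u j :=
      Finset.mul_prod_erase _ _ (Finset.mem_univ k)
    have h3 : ∀ l : Fin n, T l = (∏ j ∈ Finset.univ.erase l, u j) - ∏ j, u j := by
      intro l
      have := Finset.mul_prod_erase Finset.univ u (Finset.mem_univ l)
      rw [hT]
      dsimp only
      rw [sub_mul, one_mul, this]
    calc u k * ((∑ l ∈ Finset.univ.erase k, ∏ j ∈ (Finset.univ.erase l).erase k, u j)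
          - ((n:ℝ)-1) * ∏ j ∈ Finset.univ.erase k, u j)
        = (∑ l ∈ Finset.univ.erase k, u k * ∏ j ∈ (Finset.univ.erase l).erase k, u j)
          - ((n:ℝ)-1) * (u k * ∏ j ∈ Finset.univ.erase k, u j) := by
          rw [mul_sub, Finset.mul_sum]; ring_nf
      _ = (∑ l ∈ Finset.univ.erase k, ∏ j ∈ Finset.univ.erase l, u j)
          - ((n:ℝ)-1) * ∏ j, u j := by rw [Finset.sum_congr rfl h1, h2]
      _ = ∑ l ∈ Finset.univ.erase k, ((∏ j ∈ Finset.univ.erase l, u j) - ∏ j, u j) := by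
          rw [Finset.sum_sub_distrib]
          congr 1
          rw [Finset.sum_const, Finset.card_erase_of_mem (Finset.mem_univ k),
            Finset.card_univ, Fintype.card_fin, nsmul_eq_mul,
            Nat.cast_sub (le_trans one_le_two hn)]
          push_cast
          ring
      _ = ∑ l ∈ Finset.univ.erase k, T l := Finset.sum_congr rfl fun l _ => (h3 l).symm
  have hmain : (∑ l : Fin n, ∑ k ∈ Finset.univ.erase l,
        (∏ j ∈ (Finset.univ.erase l).erase k, u j) * X k)
      - ((n:ℝ)-1) * (∑ k : Fin n, (∏ j ∈ Finset.univ.erase k, u j) * X k)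
      = -(∑ k : Fin n, v k * (a * (R k * ∑ l ∈ Finset.univ.erase k, T l))) := by
    rw [hswap, Finset.mul_sum, ← Finset.sum_sub_distrib]
    rw [← Finset.sum_neg_distrib]
    refine Finset.sum_congr rfl fun k _ => ?_
    have hfact : (∑ l ∈ Finset.univ.erase k, (∏ j ∈ (Finset.univ.erase l).erase k, u j) * X k)
        = (∑ l ∈ Finset.univ.erase k, ∏ j ∈ (Finset.univ.erase l).erase k, u j) * X k :=
      (Finset.sum_mul _ _ _).symm
    rw [hfact]
    have := hkDk k
    rw [hX]
    dsimp only
    linear_combination (-(a * v k * R k)) * this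
  rw [hmain]
  linarith



noncomputable def uPath (Fb : ℝ → ℝ) (α c dl th t : ℝ) : ℝ :=
  Fb (c / (dl + t * (th - dl))) ^ α

noncomputable def duP (Fb fb : ℝ → ℝ) (α c dl th t : ℝ) : ℝ :=
  -((α / c) * (th - dl)) * (uPath Fb α c dl th t *
    ((c / (dl + t * (th - dl)))^2 * rtilde Fb fb (c / (dl + t * (th - dl)))))

lemma etaPos {dl th t : ℝ} (hdl : 0 < dl) (hth : 0 < th) (ht : t ∈ Set.Icc (0:ℝ) 1) :
    0 < dl + t * (th - dl) := by
  rcases le_total th dl with h | h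
  · nlinarith [mul_nonneg (sub_nonneg.2 ht.2) (sub_nonneg.2 h)]
  · nlinarith [mul_nonneg ht.1 (sub_nonneg.2 h)]

lemma etaPos' {dl th t : ℝ} (hdl : 0 < dl) (hth : 0 < th) (ht : t ∈ Set.Ioo (0:ℝ) 1) :
    0 < dl + t * (th - dl) :=
  etaPos hdl hth ⟨ht.1.le, ht.2.le⟩

lemma uPath_contOn {Fb : ℝ → ℝ} (hFb : Continuous Fb) {α c dl th : ℝ}
    (hα : 0 < α) (hdl : 0 < dl) (hth : 0 < th) :
    ContinuousOn (uPath Fb α c dl th) (Set.Icc 0 1) := by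
  refine ContinuousOn.rpow_const ?_ (fun t _ => Or.inr hα.le)
  refine hFb.comp_continuousOn ?_
  refine continuousOn_const.div ?_ ?_
  · fun_prop
  · exact fun t ht => (etaPos hdl hth ht).ne'

lemma uPath_nonneg {Fb : ℝ → ℝ} (hFb_range : ∀ x, Fb x ∈ Set.Icc (0:ℝ) 1)
    (α c dl th t : ℝ) : 0 ≤ uPath Fb α c dl th t :=
  Real.rpow_nonneg (hFb_range _).1 α

lemma uPath_le_one {Fb : ℝ → ℝ} (hFb_range : ∀ x, Fb x ∈ Set.Icc (0:ℝ) 1)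
    {α : ℝ} (hα : 0 < α) (c dl th t : ℝ) : uPath Fb α c dl th t ≤ 1 :=
  Real.rpow_le_one (hFb_range _).1 (hFb_range _).2 hα.le

/-- the exceptional set of parameters where `uPath` may fail to be differentiable -/
def badSet (Fb : ℝ → ℝ) (c dl th : ℝ) : Set ℝ :=
  {t | t ∈ Set.Ioo (0:ℝ) 1 ∧ Fb (c / (dl + t * (th - dl))) = 0 ∧
    ¬ (∀ᶠ s in nhds t, Fb (c / (dl + s * (th - dl))) = 0)}

lemma badSet_subsingleton {Fb : ℝ → ℝ} (hFb_mono : Monotone Fb)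
    (hFb_range : ∀ x, Fb x ∈ Set.Icc (0:ℝ) 1)
    {c dl th : ℝ} (hc : 0 < c) (hdl : 0 < dl) (hth : 0 < th) :
    (badSet Fb c dl th).Subsingleton := by
  -- if the argument scale increases, Fb value decreases (and conversely)
  have hzero : ∀ p ∈ Set.Ioo (0:ℝ) 1, ∀ s ∈ Set.Ioo (0:ℝ) 1,
      dl + p * (th - dl) ≤ dl + s * (th - dl) →
      Fb (c / (dl + p * (th - dl))) = 0 → Fb (c / (dl + s * (th - dl))) = 0 := by
    intro p hp s hs hle h0
    have hpp := etaPos' hdl hth hp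
    have hsp := etaPos' hdl hth hs
    have hw : c / (dl + s * (th - dl)) ≤ c / (dl + p * (th - dl)) := by
      rw [div_le_div_iff₀ hsp hpp]
      exact mul_le_mul_of_nonneg_left hle hc.le
    have h1 := hFb_mono hw
    have h2 := (hFb_range (c / (dl + s * (th - dl)))).1
    rw [h0] at h1
    linarith
  intro t₁ h₁ t₂ h₂
  by_contra hne
  obtain ⟨ht₁, hF₁, hev₁⟩ := h₁
  obtain ⟨ht₂, hF₂, hev₂⟩ := h₂
  -- helper: given a < b both bad points, derive a contradiction
  have key : ∀ a b : ℝ, a ∈ Set.Ioo (0:ℝ) 1 → b ∈ Set.Ioo (0:ℝ) 1 → a < b →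
      Fb (c / (dl + a * (th - dl))) = 0 → Fb (c / (dl + b * (th - dl))) = 0 →
      (∀ᶠ s in nhds b, Fb (c / (dl + s * (th - dl))) = 0) ∨
      (∀ᶠ s in nhds a, Fb (c / (dl + s * (th - dl))) = 0) := by
    intro a b ha hb hab hFa hFb0
    rcases le_or_gt dl th with hv | hv
    · left
      have hmem : Set.Ioo a 1 ∈ nhds b := Ioo_mem_nhds hab hb.2
      filter_upwards [hmem] with s hs
      have hs' : s ∈ Set.Ioo (0:ℝ) 1 := ⟨lt_trans ha.1 hs.1, hs.2⟩
      refine hzero a ha s hs' ?_ hFa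
      nlinarith [hs.1]
    · right
      have hmem : Set.Ioo (0:ℝ) b ∈ nhds a := Ioo_mem_nhds ha.1 hab
      filter_upwards [hmem] with s hs
      have hs' : s ∈ Set.Ioo (0:ℝ) 1 := ⟨hs.1, lt_trans hs.2 hb.2⟩
      refine hzero b hb s hs' ?_ hFb0
      nlinarith [hs.2]
  rcases lt_trichotomy t₁ t₂ with h | h | h
  · rcases key t₁ t₂ ht₁ ht₂ h hF₁ hF₂ with hev | hev
    · exact hev₂ hev
    · exact hev₁ hev
  · exact hne h
  · rcases key t₂ t₁ ht₂ ht₁ h hF₂ hF₁ with hev | hev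
    · exact hev₁ hev
    · exact hev₂ hev

lemma uPath_hasDerivAt {Fb fb : ℝ → ℝ}
    (hFb_range : ∀ x, Fb x ∈ Set.Icc (0:ℝ) 1)
    (hFb_deriv : ∀ x, HasDerivAt Fb (fb x) x)
    {α c dl th : ℝ} (hα : 0 < α) (hc : 0 < c) (hdl : 0 < dl) (hth : 0 < th)
    {t : ℝ} (ht : t ∈ Set.Ioo (0:ℝ) 1) (hbad : t ∉ badSet Fb c dl th) :
    HasDerivAt (uPath Fb α c dl th) (duP Fb fb α c dl th t) t := by
  have hηt : 0 < dl + t * (th - dl) := etaPos' hdl hth ht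
  have hηd : HasDerivAt (fun s : ℝ => dl + s * (th - dl)) (th - dl) t := by
    simpa using ((hasDerivAt_id t).mul_const (th - dl)).const_add dl
  have hwd := (hasDerivAt_const t c).div hηd hηt.ne'
  have hFd : HasDerivAt (fun s : ℝ => Fb (c / (dl + s * (th - dl))))
      (fb (c / (dl + t * (th - dl))) *
        ((0 * (dl + t * (th - dl)) - c * (th - dl)) / (dl + t * (th - dl)) ^ 2)) t :=
    (hFb_deriv (c / (dl + t * (th - dl)))).comp t hwd
  by_cases hF0 : Fb (c / (dl + t * (th - dl))) = 0
  · have hev : ∀ᶠ s in nhds t, Fb (c / (dl + s * (th - dl))) = 0 := by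
      by_contra hev
      exact hbad ⟨ht, hF0, hev⟩
    have hev' : uPath Fb α c dl th =ᶠ[nhds t] (fun _ => 0) := by
      filter_upwards [hev] with s hs
      simp [uPath, hs, Real.zero_rpow hα.ne']
    have h0 : HasDerivAt (uPath Fb α c dl th) 0 t :=
      (hasDerivAt_const t (0:ℝ)).congr_of_eventuallyEq hev'
    convert h0 using 1
    simp [duP, uPath, hF0, Real.zero_rpow hα.ne']
  · have hFpos : 0 < Fb (c / (dl + t * (th - dl))) :=
      lt_of_le_of_ne (hFb_range _).1 (Ne.symm hF0)
    have hd := hFd.rpow_const (p := α) (Or.inl hF0)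
    refine hd.congr_deriv (Eq.symm ?_)
    simp only [duP, uPath, rtilde]
    rw [Real.rpow_sub hFpos, Real.rpow_one]
    field_simp
    ring

theorem second_largest_st_scale_weak_supermajorization
    (n : ℕ) (hn : 2 ≤ n)
    (Fb fb : ℝ → ℝ)
    (hFb_mono : Monotone Fb)
    (hFb_range : ∀ x, Fb x ∈ Set.Icc (0:ℝ) 1)
    (hFb_deriv : ∀ x, HasDerivAt Fb (fb x) x)
    (hfb_nonneg : ∀ x, 0 ≤ fb x)
    (lam α : ℝ) (hlam : 0 < lam) (hα : 0 < α)
    (θ δ : Fin n → ℝ)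
    (horder : (EPlus θ ∧ EPlus δ ∧ (∀ k ≤ n, psum θ k ≤ psum δ k)) ∨ (DPlus θ ∧ DPlus δ ∧ (∀ k ≤ n, ssum θ k ≤ ssum δ k)))
    (hinc : MonotoneOn (fun w => w ^ 2 * rtilde Fb fb w) (Set.Ioi 0)) :
    ∀ x, lam < x →
      secondMaxCDF n (fun i => elsCDF Fb lam (δ i) α) x ≤
        secondMaxCDF n (fun i => elsCDF Fb lam (θ i) α) x := by
  intro x hx
  classical
  have hc : 0 < x - lam := sub_pos.mpr hx
  set c : ℝ := x - lam with hcdef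
  have hθpos : ∀ i, 0 < θ i := by
    rcases horder with ⟨⟨h, _⟩, _⟩ | ⟨⟨h, _⟩, _⟩ <;> exact h
  have hδpos : ∀ i, 0 < δ i := by
    rcases horder with ⟨_, ⟨h, _⟩, _⟩ | ⟨_, ⟨h, _⟩, _⟩ <;> exact h
  have hFbcont : Continuous Fb :=
    continuous_iff_continuousAt.mpr fun w => (hFb_deriv w).continuousAt
  -- the finite exceptional set
  set S : Finset ℝ := Finset.univ.image (fun i : Fin n =>
    if h : (badSet Fb c (δ i) (θ i)).Nonempty then h.choose else 0) with hSdef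
  have hBS : ∀ i : Fin n, ∀ t, t ∈ badSet Fb c (δ i) (θ i) → t ∈ S := by
    intro i t ht
    have hne : (badSet Fb c (δ i) (θ i)).Nonempty := ⟨t, ht⟩
    have heq : t = hne.choose :=
      badSet_subsingleton hFb_mono hFb_range hc (hδpos i) (hθpos i) ht hne.choose_spec
    rw [hSdef]
    refine Finset.mem_image.mpr ⟨i, Finset.mem_univ i, ?_⟩
    rw [dif_pos hne, ← heq]
  -- the path function
  set HH : ℝ → ℝ := fun t =>
    (∑ l : Fin n, ∏ k ∈ Finset.univ.erase l, uPath Fb α c (δ k) (θ k) t)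
      - ((n:ℝ)-1) * ∏ k : Fin n, uPath Fb α c (δ k) (θ k) t with hHH
  have hcont : ContinuousOn HH (Set.Icc 0 1) := by
    rw [hHH]
    apply ContinuousOn.sub
    · exact continuousOn_finset_sum _ fun l _ =>
        continuousOn_finset_prod _ fun k _ => uPath_contOn hFbcont hα (hδpos k) (hθpos k)
    · exact continuousOn_const.mul (continuousOn_finset_prod _ fun k _ =>
        uPath_contOn hFbcont hα (hδpos k) (hθpos k))
  -- basic bounds on u
  have hu0 : ∀ (t : ℝ) (i : Fin n), 0 ≤ uPath Fb α c (δ i) (θ i) t :=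
    fun t i => uPath_nonneg hFb_range _ _ _ _ _
  have hu1 : ∀ (t : ℝ) (i : Fin n), uPath Fb α c (δ i) (θ i) t ≤ 1 :=
    fun t i => uPath_le_one hFb_range hα _ _ _ _
  -- comparison of the Abel coefficients
  have hC : ∀ t ∈ Set.Ioo (0:ℝ) 1, ∀ i j : Fin n,
      (δ i + t * (θ i - δ i)) ≤ (δ j + t * (θ j - δ j)) →
      (α / c) * ((c / (δ j + t * (θ j - δ j)))^2 * rtilde Fb fb (c / (δ j + t * (θ j - δ j))) *
        ∑ l ∈ Finset.univ.erase j, (1 - uPath Fb α c (δ l) (θ l) t) *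
          ∏ m ∈ Finset.univ.erase l, uPath Fb α c (δ m) (θ m) t)
      ≤ (α / c) * ((c / (δ i + t * (θ i - δ i)))^2 * rtilde Fb fb (c / (δ i + t * (θ i - δ i))) *
        ∑ l ∈ Finset.univ.erase i, (1 - uPath Fb α c (δ l) (θ l) t) *
          ∏ m ∈ Finset.univ.erase l, uPath Fb α c (δ m) (θ m) t) := by
    intro t ht i j hη
    have hpi : 0 < δ i + t * (θ i - δ i) := etaPos' (hδpos i) (hθpos i) ht
    have hpj : 0 < δ j + t * (θ j - δ j) := etaPos' (hδpos j) (hθpos j) ht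
    have hw : c / (δ j + t * (θ j - δ j)) ≤ c / (δ i + t * (θ i - δ i)) := by
      rw [div_le_div_iff₀ hpj hpi]
      exact mul_le_mul_of_nonneg_left hη hc.le
    have hwi : 0 < c / (δ i + t * (θ i - δ i)) := div_pos hc hpi
    have hwj : 0 < c / (δ j + t * (θ j - δ j)) := div_pos hc hpj
    have hR : (c / (δ j + t * (θ j - δ j)))^2 * rtilde Fb fb (c / (δ j + t * (θ j - δ j)))
        ≤ (c / (δ i + t * (θ i - δ i)))^2 * rtilde Fb fb (c / (δ i + t * (θ i - δ i))) :=
      hinc (Set.mem_Ioi.mpr hwj) (Set.mem_Ioi.mpr hwi) hw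
    have hR0 : 0 ≤ (c / (δ j + t * (θ j - δ j)))^2 * rtilde Fb fb (c / (δ j + t * (θ j - δ j))) := by
      have : rtilde Fb fb (c / (δ j + t * (θ j - δ j)))
          = fb (c / (δ j + t * (θ j - δ j))) / Fb (c / (δ j + t * (θ j - δ j))) := rfl
      rw [this]
      exact mul_nonneg (sq_nonneg _) (div_nonneg (hfb_nonneg _) (hFb_range _).1)
    have huji : uPath Fb α c (δ j) (θ j) t ≤ uPath Fb α c (δ i) (θ i) t := by
      simp only [uPath]
      exact Real.rpow_le_rpow (hFb_range _).1 (hFb_mono hw) hα.le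
    have hTs := Tsum_mono n (fun l => uPath Fb α c (δ l) (θ l) t)
      (fun l => hu0 t l) (fun l => hu1 t l) i j huji
    have hT0 := Tsum_nonneg n (fun l => uPath Fb α c (δ l) (θ l) t)
      (fun l => hu0 t l) (fun l => hu1 t l) j
    exact mul_le_mul_of_nonneg_left
      (mul_le_mul hR hTs hT0 (le_trans hR0 hR)) (div_nonneg hα.le hc.le)
  -- nonnegativity of the Abel coefficients
  have hC0 : ∀ t ∈ Set.Ioo (0:ℝ) 1, ∀ k : Fin n,
      0 ≤ (α / c) * ((c / (δ k + t * (θ k - δ k)))^2 * rtilde Fb fb (c / (δ k + t * (θ k - δ k))) *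
        ∑ l ∈ Finset.univ.erase k, (1 - uPath Fb α c (δ l) (θ l) t) *
          ∏ m ∈ Finset.univ.erase l, uPath Fb α c (δ m) (θ m) t) := by
    intro t ht k
    have hR0 : 0 ≤ (c / (δ k + t * (θ k - δ k)))^2 * rtilde Fb fb (c / (δ k + t * (θ k - δ k))) := by
      have : rtilde Fb fb (c / (δ k + t * (θ k - δ k)))
          = fb (c / (δ k + t * (θ k - δ k))) / Fb (c / (δ k + t * (θ k - δ k))) := rfl
      rw [this]
      exact mul_nonneg (sq_nonneg _) (div_nonneg (hfb_nonneg _) (hFb_range _).1)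
    have hT0 := Tsum_nonneg n (fun l => uPath Fb α c (δ l) (θ l) t)
      (fun l => hu0 t l) (fun l => hu1 t l) k
    exact mul_nonneg (div_nonneg hα.le hc.le) (mul_nonneg hR0 hT0)
  -- the Abel inequality at each time
  have habel : ∀ t ∈ Set.Ioo (0:ℝ) 1,
      ∑ k : Fin n, (θ k - δ k) *
        ((α / c) * ((c / (δ k + t * (θ k - δ k)))^2 * rtilde Fb fb (c / (δ k + t * (θ k - δ k))) *
          ∑ l ∈ Finset.univ.erase k, (1 - uPath Fb α c (δ l) (θ l) t) *
            ∏ m ∈ Finset.univ.erase l, uPath Fb α c (δ m) (θ m) t)) ≤ 0 := by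
    intro t ht
    rcases horder with ⟨⟨_, hθm⟩, ⟨_, hδm⟩, hps⟩ | ⟨⟨_, hθa⟩, ⟨_, hδa⟩, hss⟩
    · refine abel_fin n (fun k => θ k - δ k) _ (fun k => hC0 t ht k) ?_ ?_
      · intro i j hij
        refine hC t ht i j ?_
        have h1 : θ i ≤ θ j := hθm hij
        have h2 : δ i ≤ δ j := hδm hij
        nlinarith [mul_nonneg ht.1.le (sub_nonneg.2 h1),
          mul_nonneg (sub_nonneg.2 ht.2.le) (sub_nonneg.2 h2)]
      · intro k hk
        have := hps k hk
        simp only [psum] at this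
        rw [Finset.sum_sub_distrib]
        linarith
    · refine abel_fin_rev n (fun k => θ k - δ k) _ (fun k => hC0 t ht k) ?_ ?_
      · intro i j hij
        refine hC t ht j i ?_
        have h1 : θ j ≤ θ i := hθa hij
        have h2 : δ j ≤ δ i := hδa hij
        nlinarith [mul_nonneg ht.1.le (sub_nonneg.2 h1),
          mul_nonneg (sub_nonneg.2 ht.2.le) (sub_nonneg.2 h2)]
      · intro k hk
        have := hss k hk
        simp only [ssum] at this
        rw [Finset.sum_sub_distrib]
        linarith
  -- derivative of HH off the bad set
  have hder : ∀ t ∈ Set.Ioo (0:ℝ) 1, t ∉ S → ∃ d, 0 ≤ d ∧ HasDerivAt HH d t := by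
    intro t ht htS
    have hudk : ∀ k : Fin n,
        HasDerivAt (uPath Fb α c (δ k) (θ k)) (duP Fb fb α c (δ k) (θ k) t) t := by
      intro k
      refine uPath_hasDerivAt hFb_range hFb_deriv hα hc (hδpos k) (hθpos k) ht ?_
      intro hbad
      exact htS (hBS k t hbad)
    have hprod : ∀ s : Finset (Fin n),
        HasDerivAt (fun y => ∏ k ∈ s, uPath Fb α c (δ k) (θ k) y)
          (∑ k ∈ s, (∏ j ∈ s.erase k, uPath Fb α c (δ j) (θ j) t) *
            duP Fb fb α c (δ k) (θ k) t) t := by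
      intro s
      have := HasDerivAt.fun_finsetProd (u := s)
        (f := fun (k : Fin n) (y : ℝ) => uPath Fb α c (δ k) (θ k) y)
        (f' := fun k => duP Fb fb α c (δ k) (θ k) t) (x := t) (fun k _ => hudk k)
      simpa [smul_eq_mul] using this
    have hH' : HasDerivAt HH
        ((∑ l : Fin n, ∑ k ∈ Finset.univ.erase l,
          (∏ j ∈ (Finset.univ.erase l).erase k, uPath Fb α c (δ j) (θ j) t) *
            duP Fb fb α c (δ k) (θ k) t)
        - ((n:ℝ)-1) * (∑ k : Fin n,
          (∏ j ∈ Finset.univ.erase k, uPath Fb α c (δ j) (θ j) t) *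
            duP Fb fb α c (δ k) (θ k) t)) t := by
      rw [hHH]
      exact (HasDerivAt.fun_sum fun l _ => hprod (Finset.univ.erase l)).sub
        ((hprod Finset.univ).const_mul ((n:ℝ)-1))
    refine ⟨_, ?_, hH'⟩
    have := slice_nonneg n hn (fun k => uPath Fb α c (δ k) (θ k) t)
      (fun k => (c / (δ k + t * (θ k - δ k)))^2 * rtilde Fb fb (c / (δ k + t * (θ k - δ k))))
      (fun k => θ k - δ k) (α / c) ?_
    · convert this using 3 <;> simp [duP]
    · simpa using habel t ht
  -- endpoints
  have he0 : HH 0 = secondMaxCDF n (fun i => elsCDF Fb lam (δ i) α) x := by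
    have h0 : ∀ i : Fin n, uPath Fb α c (δ i) (θ i) 0 = elsCDF Fb lam (δ i) α x := by
      intro i
      simp only [uPath, elsCDF]
      rw [hcdef]
      norm_num
    simp only [hHH, secondMaxCDF, h0]
  have he1 : HH 1 = secondMaxCDF n (fun i => elsCDF Fb lam (θ i) α) x := by
    have h1 : ∀ i : Fin n, uPath Fb α c (δ i) (θ i) 1 = elsCDF Fb lam (θ i) α x := by
      intro i
      simp only [uPath, elsCDF]
      rw [hcdef, show δ i + 1 * (θ i - δ i) = θ i from by ring]
    simp only [hHH, secondMaxCDF, h1]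
  rw [← he0, ← he1]
  exact le_of_deriv_nonneg_off_finite S 0 1 zero_le_one HH hcont hder
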